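/- arXiv:1306.1720 — 3 statements merged into one kernel-verified Lean document; each statement's English description precedes it below -/
import Mathlib

section
/- If F̄ : (0,∞) → (0,∞) is nonincreasing and regularly varying at infinity with index −β for some β > 1, then ∫_u^∞ F̄(y) dy ~ u·F̄(u)/(β−1) as u → ∞, and consequently F̄(u)/ (the integrated tail ∫_u^∞ F̄(y)dy) ~ (β−1)/u. -/
open Filter MeasureTheory Set

lemma intIoc_le (Fb : ℝ → ℝ) (hanti : ∀ u v : ℝ, 0 < u → u ≤ v → Fb v ≤ Fb u)
    {a b : ℝ} (ha : 0 < a) (hab : a ≤ b) (hI : IntegrableOn Fb (Set.Ioc a b)) :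
    ∫ y in Set.Ioc a b, Fb y ≤ (b - a) * Fb a := by
  have h := setIntegral_mono_on hI (integrableOn_const (by simp [Real.volume_Ioc]))
    measurableSet_Ioc (fun x hx => hanti a x ha hx.1.le)
  simpa [setIntegral_const, Real.volume_Ioc, ENNReal.toReal_ofReal (by linarith : (0:ℝ) ≤ b - a),
    smul_eq_mul, max_eq_left (sub_nonneg.2 hab)] using h

lemma intIoc_ge (Fb : ℝ → ℝ) (hanti : ∀ u v : ℝ, 0 < u → u ≤ v → Fb v ≤ Fb u)
    {a b : ℝ} (ha : 0 < a) (hab : a ≤ b) (hI : IntegrableOn Fb (Set.Ioc a b)) :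
    (b - a) * Fb b ≤ ∫ y in Set.Ioc a b, Fb y := by
  have h := setIntegral_mono_on (integrableOn_const (by simp [Real.volume_Ioc])) hI
    measurableSet_Ioc (fun x hx => hanti x b (lt_trans ha hx.1) hx.2)
  simpa [setIntegral_const, Real.volume_Ioc, ENNReal.toReal_ofReal (by linarith : (0:ℝ) ≤ b - a),
    smul_eq_mul, max_eq_left (sub_nonneg.2 hab)] using h

lemma telescope (Fb : ℝ → ℝ) {u r : ℝ} (hu : 0 < u) (hr : 1 < r)
    (hi : ∀ a b : ℝ, 0 < a → IntegrableOn Fb (Set.Ioc a b)) (N : ℕ) :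
    ∫ y in Set.Ioc u (u * r ^ N), Fb y
      = ∑ k ∈ Finset.range N, ∫ y in Set.Ioc (u * r ^ k) (u * r ^ (k+1)), Fb y := by
  induction N with
  | zero => simp
  | succ n ih =>
    have hr0 : (0:ℝ) < r := by linarith
    have h1 : u ≤ u * r ^ n := le_mul_of_one_le_right hu.le (one_le_pow₀ hr.le)
    have h2 : u * r ^ n ≤ u * r ^ (n+1) := by
      have h3 : r ^ n ≤ r ^ (n+1) := pow_le_pow_right₀ hr.le (Nat.le_succ n)
      nlinarith
    rw [Finset.sum_range_succ, ← ih, ← setIntegral_union (Set.Ioc_disjoint_Ioc_of_le le_rfl)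
      measurableSet_Ioc (hi _ _ hu) (hi _ _ (by positivity)),
      Set.Ioc_union_Ioc_eq_Ioc h1 h2]

lemma potter_up (Fb : ℝ → ℝ) {r c u0 u : ℝ} (hr : 1 < r) (hc : 0 ≤ c) (hu0 : 0 < u0)
    (hu : u0 ≤ u) (hb : ∀ v, u0 ≤ v → Fb (r * v) ≤ c * Fb v) (k : ℕ) :
    Fb (u * r ^ k) ≤ c ^ k * Fb u := by
  induction k with
  | zero => simp
  | succ n ih =>
    have hk : u0 ≤ u * r ^ n :=
      hu.trans (le_mul_of_one_le_right (hu0.trans_le hu).le (one_le_pow₀ hr.le))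
    calc Fb (u * r ^ (n+1)) = Fb (r * (u * r ^ n)) := by ring_nf
      _ ≤ c * Fb (u * r ^ n) := hb _ hk
      _ ≤ c * (c ^ n * Fb u) := by exact mul_le_mul_of_nonneg_left ih hc
      _ = c ^ (n+1) * Fb u := by ring

lemma potter_lo (Fb : ℝ → ℝ) {r c u0 u : ℝ} (hr : 1 < r) (hc : 0 ≤ c) (hu0 : 0 < u0)
    (hu : u0 ≤ u) (hb : ∀ v, u0 ≤ v → c * Fb v ≤ Fb (r * v)) (k : ℕ) :
    c ^ k * Fb u ≤ Fb (u * r ^ k) := by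
  induction k with
  | zero => simp
  | succ n ih =>
    have hk : u0 ≤ u * r ^ n :=
      hu.trans (le_mul_of_one_le_right (hu0.trans_le hu).le (one_le_pow₀ hr.le))
    calc c ^ (n+1) * Fb u = c * (c ^ n * Fb u) := by ring
      _ ≤ c * Fb (u * r ^ n) := mul_le_mul_of_nonneg_left ih hc
      _ ≤ Fb (r * (u * r ^ n)) := hb _ hk
      _ = Fb (u * r ^ (n+1)) := by ring_nf

lemma iUnion_Ioc' {u r : ℝ} (hu : 0 < u) (hr : 1 < r) :
    (⋃ N : ℕ, Set.Ioc u (u * r ^ N)) = Set.Ioi u := by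
  ext y
  simp only [Set.mem_iUnion, Set.mem_Ioc, Set.mem_Ioi]
  constructor
  · rintro ⟨N, h1, _⟩; exact h1
  · intro hy
    obtain ⟨n, hn⟩ := pow_unbounded_of_one_lt (y / u) hr
    exact ⟨n, hy, by rw [div_lt_iff₀ hu] at hn; nlinarith⟩

lemma tendsto_trunc (Fb : ℝ → ℝ) (hint : ∀ u > 0, IntegrableOn Fb (Set.Ioi u))
    {u r : ℝ} (hu : 0 < u) (hr : 1 < r) :
    Tendsto (fun N : ℕ => ∫ y in Set.Ioc u (u * r ^ N), Fb y) atTop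
      (nhds (∫ y in Set.Ioi u, Fb y)) := by
  have hmono : Monotone (fun N : ℕ => Set.Ioc u (u * r ^ N)) := by
    intro N M hNM
    exact Set.Ioc_subset_Ioc_right (by
      have := pow_le_pow_right₀ hr.le hNM; nlinarith)
  have := tendsto_setIntegral_of_monotone (μ := volume) (f := Fb)
    (s := fun N : ℕ => Set.Ioc u (u * r ^ N)) (fun N => measurableSet_Ioc) hmono
    (by rw [iUnion_Ioc' hu hr]; exact hint u hu)
  rwa [iUnion_Ioc' hu hr] at this

lemma up_bound (Fb : ℝ → ℝ) (hanti : ∀ u v : ℝ, 0 < u → u ≤ v → Fb v ≤ Fb u)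
    (hint : ∀ u > 0, IntegrableOn Fb (Set.Ioi u))
    {r c u0 u : ℝ} (hr : 1 < r) (hc : 0 < c) (hrc : r * c < 1) (hu0 : 0 < u0)
    (hu : u0 ≤ u) (hFu : 0 ≤ Fb u) (hb : ∀ v, u0 ≤ v → Fb (r * v) ≤ c * Fb v) :
    ∫ y in Set.Ioi u, Fb y ≤ u * Fb u * ((r - 1) / (1 - r * c)) := by
  have hu' : 0 < u := hu0.trans_le hu
  have hi : ∀ a b : ℝ, 0 < a → IntegrableOn Fb (Set.Ioc a b) :=
    fun a b ha => (hint a ha).mono_set Set.Ioc_subset_Ioi_self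
  have hsum := hasSum_geometric_of_lt_one (by positivity : (0:ℝ) ≤ r * c) hrc
  have key : ∀ N : ℕ, ∫ y in Set.Ioc u (u * r ^ N), Fb y
      ≤ u * Fb u * ((r - 1) / (1 - r * c)) := by
    intro N
    rw [telescope Fb hu' hr hi N]
    have hterm : ∀ k ∈ Finset.range N,
        ∫ y in Set.Ioc (u * r ^ k) (u * r ^ (k+1)), Fb y
          ≤ u * Fb u * (r - 1) * (r * c) ^ k := by
      intro k _
      have hak : (0:ℝ) < u * r ^ k := by positivity
      have hab : u * r ^ k ≤ u * r ^ (k+1) := by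
        have h3 : r ^ k ≤ r ^ (k+1) := pow_le_pow_right₀ hr.le (Nat.le_succ k)
        nlinarith
      calc ∫ y in Set.Ioc (u * r ^ k) (u * r ^ (k+1)), Fb y
          ≤ (u * r ^ (k+1) - u * r ^ k) * Fb (u * r ^ k) :=
            intIoc_le Fb hanti hak hab (hi _ _ hak)
        _ ≤ (u * r ^ (k+1) - u * r ^ k) * (c ^ k * Fb u) := by
            apply mul_le_mul_of_nonneg_left (potter_up Fb hr hc.le hu0 hu hb k)
            nlinarith
        _ = u * Fb u * (r - 1) * (r * c) ^ k := by rw [mul_pow]; ring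
    calc ∑ k ∈ Finset.range N, ∫ y in Set.Ioc (u * r ^ k) (u * r ^ (k+1)), Fb y
        ≤ ∑ k ∈ Finset.range N, u * Fb u * (r - 1) * (r * c) ^ k :=
          Finset.sum_le_sum hterm
      _ = u * Fb u * (r - 1) * ∑ k ∈ Finset.range N, (r * c) ^ k := by
          rw [Finset.mul_sum]
      _ ≤ u * Fb u * (r - 1) * (1 - r * c)⁻¹ := by
          apply mul_le_mul_of_nonneg_left _
            (mul_nonneg (mul_nonneg hu'.le hFu) (by linarith : (0:ℝ) ≤ r - 1))
          rw [← hsum.tsum_eq]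
          exact Summable.sum_le_tsum _ (fun i _ => by positivity) hsum.summable
      _ = u * Fb u * ((r - 1) / (1 - r * c)) := by rw [div_eq_mul_inv]; ring
  exact le_of_tendsto (tendsto_trunc Fb hint hu' hr) (Eventually.of_forall key)

lemma lo_bound (Fb : ℝ → ℝ) (hpos : ∀ u > 0, 0 < Fb u)
    (hanti : ∀ u v : ℝ, 0 < u → u ≤ v → Fb v ≤ Fb u)
    (hint : ∀ u > 0, IntegrableOn Fb (Set.Ioi u))
    {r c u0 u : ℝ} (hr : 1 < r) (hc : 0 < c) (hrc : r * c < 1) (hu0 : 0 < u0)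
    (hu : u0 ≤ u) (hb : ∀ v, u0 ≤ v → c * Fb v ≤ Fb (r * v)) :
    u * Fb u * ((r - 1) * c / (1 - r * c)) ≤ ∫ y in Set.Ioi u, Fb y := by
  have hu' : 0 < u := hu0.trans_le hu
  have hFu : 0 ≤ Fb u := (hpos u hu').le
  have hi : ∀ a b : ℝ, 0 < a → IntegrableOn Fb (Set.Ioc a b) :=
    fun a b ha => (hint a ha).mono_set Set.Ioc_subset_Ioi_self
  have hsum := hasSum_geometric_of_lt_one (by positivity : (0:ℝ) ≤ r * c) hrc
  have key : ∀ N : ℕ, u * Fb u * ((r - 1) * c) * ∑ k ∈ Finset.range N, (r * c) ^ k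
      ≤ ∫ y in Set.Ioi u, Fb y := by
    intro N
    have step1 : ∫ y in Set.Ioc u (u * r ^ N), Fb y ≤ ∫ y in Set.Ioi u, Fb y := by
      apply setIntegral_mono_set (hint u hu')
      · exact (ae_restrict_iff' measurableSet_Ioi).2
          (Eventually.of_forall fun y hy => (hpos y (hu'.trans hy)).le)
      · exact (Set.Ioc_subset_Ioi_self).eventuallyLE
    refine le_trans ?_ step1
    rw [telescope Fb hu' hr hi N, Finset.mul_sum]
    apply Finset.sum_le_sum
    intro k _
    have hak : (0:ℝ) < u * r ^ k := by positivity
    have hab : u * r ^ k ≤ u * r ^ (k+1) := by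
      have h3 : r ^ k ≤ r ^ (k+1) := pow_le_pow_right₀ hr.le (Nat.le_succ k)
      nlinarith
    calc u * Fb u * ((r - 1) * c) * (r * c) ^ k
        = (u * r ^ (k+1) - u * r ^ k) * (c ^ (k+1) * Fb u) := by rw [mul_pow]; ring
      _ ≤ (u * r ^ (k+1) - u * r ^ k) * Fb (u * r ^ (k+1)) := by
          apply mul_le_mul_of_nonneg_left (potter_lo Fb hr hc.le hu0 hu hb (k+1))
          nlinarith
      _ ≤ ∫ y in Set.Ioc (u * r ^ k) (u * r ^ (k+1)), Fb y :=
          intIoc_ge Fb hanti hak hab (hi _ _ hak)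
  have hlim : Tendsto (fun N : ℕ => u * Fb u * ((r - 1) * c) * ∑ k ∈ Finset.range N, (r * c) ^ k)
      atTop (nhds (u * Fb u * ((r - 1) * c) * (1 - r * c)⁻¹)) :=
    hsum.tendsto_sum_nat.const_mul _
  have := le_of_tendsto hlim (Eventually.of_forall key)
  calc u * Fb u * ((r - 1) * c / (1 - r * c))
      = u * Fb u * ((r - 1) * c) * (1 - r * c)⁻¹ := by rw [div_eq_mul_inv]; ring
    _ ≤ _ := this
open Filter MeasureTheory Set

lemma slope_lim (β : ℝ) (hβ : 1 < β) :
    Tendsto (fun r : ℝ => (r - 1) / (1 - r ^ (1 - β))) (nhdsWithin 1 (Set.Ioi 1))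
      (nhds (β - 1)⁻¹) := by
  have h1 : HasDerivAt (fun x : ℝ => x ^ (1 - β)) (1 - β) 1 := by
    have := Real.hasDerivAt_rpow_const (x := 1) (p := 1 - β) (Or.inl one_ne_zero)
    simpa using this
  have hf : HasDerivAt (fun x : ℝ => 1 - x ^ (1 - β)) (β - 1) 1 := by
    have := (hasDerivAt_const 1 (1:ℝ)).sub h1
    rw [show β - 1 = -(1 - β) by ring]; exact h1.const_sub 1
  have hs := hasDerivAt_iff_tendsto_slope.1 hf
  have hs' : Tendsto (fun r : ℝ => (1 - r ^ (1 - β)) / (r - 1))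
      (nhdsWithin 1 (Set.Ioi 1)) (nhds (β - 1)) := by
    have hmono : nhdsWithin (1:ℝ) (Set.Ioi 1) ≤ nhdsWithin 1 {(1:ℝ)}ᶜ :=
      nhdsWithin_mono 1 (fun x hx => ne_of_gt hx)
    refine (hs.mono_left hmono).congr' ?_
    filter_upwards [self_mem_nhdsWithin] with r hr
    simp [slope, Real.one_rpow]; ring
  have hβ0 : (β - 1) ≠ 0 := by linarith
  have := hs'.inv₀ hβ0
  refine this.congr (fun r => ?_)
  rw [inv_div]

lemma choose_consts (β δ : ℝ) (hβ : 1 < β) (hδ : 0 < δ) :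
    ∃ r c c' : ℝ, 1 < r ∧ 0 < c' ∧ c' < r ^ (-β) ∧ r ^ (-β) < c ∧ r * c < 1 ∧
      (r - 1) / (1 - r * c) < (β - 1)⁻¹ + δ ∧
      (β - 1)⁻¹ - δ < (r - 1) * c' / (1 - r * c') := by
  set a := (β - 1)⁻¹ with ha
  -- limits as r → 1⁺
  have hA := slope_lim β hβ
  have hrpow : Tendsto (fun r : ℝ => r ^ (-β)) (nhdsWithin 1 (Set.Ioi 1)) (nhds 1) := by
    have : ContinuousAt (fun r : ℝ => r ^ (-β)) 1 :=
      Real.continuousAt_rpow_const 1 (-β) (Or.inl one_ne_zero)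
    have := this.continuousWithinAt (s := Set.Ioi 1)
    simpa [Real.one_rpow] using this.tendsto
  have hB : Tendsto (fun r : ℝ => r ^ (-β) * ((r - 1) / (1 - r ^ (1 - β))))
      (nhdsWithin 1 (Set.Ioi 1)) (nhds a) := by
    have := hrpow.mul hA
    simpa using this
  have hev : ∀ᶠ r in nhdsWithin (1:ℝ) (Set.Ioi 1),
      (r - 1) / (1 - r ^ (1 - β)) < a + δ/2 ∧
      a - δ/2 < r ^ (-β) * ((r - 1) / (1 - r ^ (1 - β))) ∧ 1 < r := by
    filter_upwards [hA.eventually (gt_mem_nhds (by linarith : a < a + δ/2)),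
      hB.eventually (lt_mem_nhds (by linarith : a - δ/2 < a)), self_mem_nhdsWithin]
      with r h1 h2 h3
    exact ⟨h1, h2, h3⟩
  obtain ⟨r, hA', hB', hr⟩ := hev.exists
  have hr0 : (0:ℝ) < r := by linarith
  set c₀ : ℝ := r ^ (-β) with hc₀
  have hc₀pos : 0 < c₀ := Real.rpow_pos_of_pos hr0 _
  have hrc₀ : r * c₀ = r ^ (1 - β) := by
    have h' : (1:ℝ) - β = 1 + (-β) := by ring
    rw [h', Real.rpow_add hr0, Real.rpow_one]
  have hrc₀1 : r ^ (1 - β) < 1 :=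
    Real.rpow_lt_one_of_one_lt_of_neg hr (by linarith)
  have hden : 0 < 1 - r * c₀ := by rw [hrc₀]; linarith
  -- choose c slightly above c₀
  have hgc : Tendsto (fun c : ℝ => (r - 1) / (1 - r * c)) (nhds c₀)
      (nhds ((r - 1) / (1 - r * c₀))) := by
    apply Tendsto.div tendsto_const_nhds
    · exact (tendsto_const_nhds.sub (tendsto_const_nhds.mul tendsto_id))
    · exact ne_of_gt hden
  have hmul : Tendsto (fun c : ℝ => r * c) (nhds c₀) (nhds (r * c₀)) :=
    tendsto_const_nhds.mul tendsto_id
  have hceq : (r - 1) / (1 - r * c₀) = (r - 1) / (1 - r ^ (1 - β)) := by rw [hrc₀]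
  have hevc : ∀ᶠ c in nhdsWithin c₀ (Set.Ioi c₀),
      (r - 1) / (1 - r * c) < a + δ ∧ r * c < 1 ∧ c₀ < c := by
    have e1 := (hgc.mono_left (nhdsWithin_le_nhds (s := Set.Ioi c₀))).eventually
      (gt_mem_nhds (show (r - 1) / (1 - r * c₀) < a + δ by rw [hceq]; linarith))
    have e2 := (hmul.mono_left (nhdsWithin_le_nhds (s := Set.Ioi c₀))).eventually
      (gt_mem_nhds (show r * c₀ < 1 by linarith))
    filter_upwards [e1, e2, self_mem_nhdsWithin] with c h1 h2 h3
    exact ⟨h1, h2, h3⟩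
  obtain ⟨c, hc1, hc2, hc3⟩ := hevc.exists
  -- choose c' slightly below c₀
  have hgc' : Tendsto (fun x : ℝ => (r - 1) * x / (1 - r * x)) (nhds c₀)
      (nhds ((r - 1) * c₀ / (1 - r * c₀))) := by
    apply Tendsto.div (tendsto_const_nhds.mul tendsto_id)
    · exact (tendsto_const_nhds.sub (tendsto_const_nhds.mul tendsto_id))
    · exact ne_of_gt hden
  have hc'val : a - δ < (r - 1) * c₀ / (1 - r * c₀) := by
    have : (r - 1) * c₀ / (1 - r * c₀) = c₀ * ((r - 1) / (1 - r ^ (1 - β))) := by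
      rw [← hrc₀]; ring
    rw [this]; linarith
  have hevc' : ∀ᶠ x in nhdsWithin c₀ (Set.Iio c₀),
      a - δ < (r - 1) * x / (1 - r * x) ∧ 0 < x ∧ x < c₀ := by
    have e1 := (hgc'.mono_left (nhdsWithin_le_nhds (s := Set.Iio c₀))).eventually (lt_mem_nhds hc'val)
    have e2 : ∀ᶠ x in nhdsWithin c₀ (Set.Iio c₀), 0 < x := by
      have := (tendsto_id.mono_left (nhdsWithin_le_nhds (s := Set.Iio c₀))).eventually
        (lt_mem_nhds hc₀pos)
      simpa using this
    filter_upwards [e1, e2, self_mem_nhdsWithin] with x h1 h2 h3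
    exact ⟨h1, h2, h3⟩
  obtain ⟨c', hc'1, hc'2, hc'3⟩ := hevc'.exists
  exact ⟨r, c, c', hr, hc'2, hc'3, hc3, hc2, hc1, hc'1⟩

/-- Karamata: F̄ ∈ RV(−β), β > 1 ⟹ ∫_u^∞ F̄ ~ u F̄(u)/(β−1). -/
theorem stmt_9 (Fb : ℝ → ℝ) (β : ℝ) (hβ : 1 < β)
    (hpos : ∀ u > 0, 0 < Fb u)
    (hanti : ∀ u v : ℝ, 0 < u → u ≤ v → Fb v ≤ Fb u)
    (hint : ∀ u > 0, IntegrableOn Fb (Set.Ioi u))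
    (hRV : ∀ l > 0, Tendsto (fun u => Fb (l * u) / Fb u) atTop (nhds (l ^ (-β)))) :
    Tendsto (fun u => (∫ y in Set.Ioi u, Fb y) / (u * Fb u / (β - 1))) atTop (nhds 1) ∧
    Tendsto (fun u => u * (Fb u / ∫ y in Set.Ioi u, Fb y)) atTop (nhds (β - 1)) := by
  have hβ0 : β - 1 ≠ 0 := by linarith
  have ha0 : (β - 1)⁻¹ ≠ 0 := inv_ne_zero hβ0
  have hG : Tendsto (fun u => (∫ y in Set.Ioi u, Fb y) / (u * Fb u)) atTop
      (nhds (β - 1)⁻¹) := by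
    rw [Metric.tendsto_atTop]
    intro δ hδ
    obtain ⟨r, c, c', hr, hc'pos, hc'lt, hclt, hrc, hup, hlo⟩ := choose_consts β δ hβ hδ
    have hr0 : (0:ℝ) < r := by linarith
    have hcpos : 0 < c := lt_trans (Real.rpow_pos_of_pos hr0 _) hclt
    have hc'c : c' < c := lt_trans hc'lt hclt
    have hrc' : r * c' < 1 := lt_trans (by nlinarith) hrc
    have hRVr := hRV r hr0
    have e1 : ∀ᶠ u in atTop, Fb (r*u)/Fb u < c := hRVr.eventually (gt_mem_nhds hclt)
    have e2 : ∀ᶠ u in atTop, c' < Fb (r*u)/Fb u := hRVr.eventually (lt_mem_nhds hc'lt)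
    have hcomb := (e1.and e2)
    rw [eventually_atTop] at hcomb
    obtain ⟨u0, hu0⟩ := hcomb
    have hmax0 : (0:ℝ) < max u0 1 := lt_of_lt_of_le one_pos (le_max_right _ _)
    refine ⟨max u0 1, fun u hu => ?_⟩
    have hu1 : (1:ℝ) ≤ u := le_trans (le_max_right _ _) hu
    have hu' : (0:ℝ) < u := by linarith
    have hb_up : ∀ v, max u0 1 ≤ v → Fb (r*v) ≤ c * Fb v := by
      intro v hv
      have hv1 : (1:ℝ) ≤ v := le_trans (le_max_right _ _) hv
      have hv0 : (0:ℝ) < v := by linarith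
      have h := (hu0 v (le_trans (le_max_left _ _) hv)).1
      have := (div_lt_iff₀ (hpos v hv0)).1 h
      linarith
    have hb_lo : ∀ v, max u0 1 ≤ v → c' * Fb v ≤ Fb (r*v) := by
      intro v hv
      have hv1 : (1:ℝ) ≤ v := le_trans (le_max_right _ _) hv
      have hv0 : (0:ℝ) < v := by linarith
      have h := (hu0 v (le_trans (le_max_left _ _) hv)).2
      have := (lt_div_iff₀ (hpos v hv0)).1 h
      linarith
    have hU := up_bound Fb hanti hint hr hcpos hrc hmax0 hu (hpos u hu').le hb_up
    have hL := lo_bound Fb hpos hanti hint hr hc'pos hrc' hmax0 hu hb_lo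
    have hD : 0 < u * Fb u := mul_pos hu' (hpos u hu')
    rw [Real.dist_eq, abs_lt]
    have hGu_le : (∫ y in Set.Ioi u, Fb y)/(u*Fb u) ≤ (r-1)/(1-r*c) := by
      rw [div_le_iff₀ hD]; nlinarith
    have hGu_ge : (r-1)*c'/(1-r*c') ≤ (∫ y in Set.Ioi u, Fb y)/(u*Fb u) := by
      rw [le_div_iff₀ hD]; nlinarith
    constructor <;> linarith
  constructor
  · have heq : (fun u => (∫ y in Set.Ioi u, Fb y) / (u * Fb u / (β - 1)))
        = fun u => ((∫ y in Set.Ioi u, Fb y) / (u * Fb u)) * (β - 1) := by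
      funext u; rw [div_div_eq_mul_div, div_mul_eq_mul_div]
    rw [heq]
    have h := hG.mul_const (β - 1)
    rwa [inv_mul_cancel₀ hβ0] at h
  · have heq : (fun u => u * (Fb u / ∫ y in Set.Ioi u, Fb y))
        = fun u => ((∫ y in Set.Ioi u, Fb y) / (u * Fb u))⁻¹ := by
      funext u; rw [inv_div, mul_div_assoc]
    rw [heq]
    have h := hG.inv₀ ha0
    rwa [inv_inv] at h
end

section
/- Let Π̄_{H*} : (0,∞) → [0,∞) be nonincreasing and Π_𝓗 a measure on (0,∞) with finite tail Π̄_𝓗(x) = Π_𝓗((x,∞)) for x > 0 and ∫_{(0,1]} y Π_𝓗(dy) < ∞. Define A(x) = ∫₀ˣ Π̄_{H*}(u) du and I(x) = ∫_{(0,∞)} Π_𝓗(dy) ∫₁ˣ (Π̄_{H*}(u) − Π̄_{H*}(y+u)) du. If A(∞) = ∞, then I(x)/A(x) → 0 as x → ∞. -/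
open Filter MeasureTheory Set

/-- I(x)/A(x) → 0 when A(∞) = ∞. -/
theorem stmt_14 (Pib : ℝ → ℝ) (PiH : Measure ℝ)
    (hnonneg : ∀ x > 0, 0 ≤ Pib x)
    (hanti : ∀ x y : ℝ, 0 < x → x ≤ y → Pib y ≤ Pib x)
    (hint : ∀ x > 0, IntervalIntegrable Pib volume 0 x)
    (A : ℝ → ℝ) (hA : ∀ x, A x = ∫ u in (0:ℝ)..x, Pib u)
    (hAinf : Tendsto A atTop atTop)
    (htailfin : ∀ K > 0, PiH (Set.Ioi K) < ⊤)
    (htail : Tendsto (fun K => (PiH (Set.Ioi K)).toReal) atTop (nhds 0))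
    (hmom : ∀ K > 0, IntegrableOn (fun y => y) (Set.Ioc (0:ℝ) K) PiH)
    (I : ℝ → ℝ)
    (hI : ∀ x, I x = ∫ y in Set.Ioi (0:ℝ),
      (∫ u in (1:ℝ)..x, (Pib u - Pib (y + u))) ∂PiH) :
    Tendsto (fun x => I x / A x) atTop (nhds 0) := by
  have hPib1 : 0 ≤ Pib 1 := hnonneg 1 one_pos
  -- interval integrability of Pib on positive intervals
  have hPibInt : ∀ a b : ℝ, 0 < a → 0 < b → IntervalIntegrable Pib volume a b := by
    intro a b ha hb
    apply AntitoneOn.intervalIntegrable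
    intro u hu v hv huv
    exact hanti u v (lt_of_lt_of_le (lt_min ha hb) hu.1) huv
  -- integrability of the shifted function
  have hShiftInt : ∀ y x : ℝ, 0 ≤ y → (1:ℝ) ≤ x →
      IntervalIntegrable (fun u => Pib (y + u)) volume 1 x := by
    intro y x hy hx
    apply AntitoneOn.intervalIntegrable
    intro u hu v hv huv
    have h1 : (1:ℝ) ⊓ x = 1 := min_eq_left hx
    have hu1 : (1:ℝ) ≤ u := by rw [← h1]; exact hu.1
    exact hanti (y + u) (y + v) (by linarith) (by linarith)
  -- key bounds on the inner integral
  have hgkey : ∀ y x : ℝ, 0 < y → (1:ℝ) ≤ x →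
      0 ≤ (∫ u in (1:ℝ)..x, (Pib u - Pib (y + u))) ∧
      (∫ u in (1:ℝ)..x, (Pib u - Pib (y + u))) ≤ Pib 1 * y ∧
      (∫ u in (1:ℝ)..x, (Pib u - Pib (y + u))) ≤ A x := by
    intro y x hy hx
    have i1 : IntervalIntegrable Pib volume 1 x := hPibInt 1 x one_pos (by linarith)
    have i2 : IntervalIntegrable (fun u => Pib (y + u)) volume 1 x := hShiftInt y x hy.le hx
    have hsub : (∫ u in (1:ℝ)..x, (Pib u - Pib (y + u)))
        = (∫ u in (1:ℝ)..x, Pib u) - ∫ u in (1:ℝ)..x, Pib (y + u) :=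
      intervalIntegral.integral_sub i1 i2
    have hshift : (∫ u in (1:ℝ)..x, Pib (y + u)) = ∫ u in (y+1)..(y+x), Pib u :=
      intervalIntegral.integral_comp_add_left Pib y
    have e1 : (∫ u in (1:ℝ)..x, Pib u) + (∫ u in x..(y+x), Pib u)
        = ∫ u in (1:ℝ)..(y+x), Pib u :=
      intervalIntegral.integral_add_adjacent_intervals i1
        (hPibInt x (y+x) (by linarith) (by linarith))
    have e2 : (∫ u in (1:ℝ)..(y+1), Pib u) + (∫ u in (y+1)..(y+x), Pib u)
        = ∫ u in (1:ℝ)..(y+x), Pib u :=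
      intervalIntegral.integral_add_adjacent_intervals
        (hPibInt 1 (y+1) one_pos (by linarith))
        (hPibInt (y+1) (y+x) (by linarith) (by linarith))
    -- nonnegativity of the pieces
    have hp1 : 0 ≤ ∫ u in x..(y+x), Pib u :=
      intervalIntegral.integral_nonneg (by linarith)
        (fun u hu => hnonneg u (by linarith [hu.1]))
    have hp2 : 0 ≤ ∫ u in (y+1)..(y+x), Pib u :=
      intervalIntegral.integral_nonneg (by linarith)
        (fun u hu => hnonneg u (by linarith [hu.1]))
    have hp3 : (∫ u in (1:ℝ)..(y+1), Pib u) ≤ Pib 1 * y := by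
      have hc : (∫ u in (1:ℝ)..(y+1), Pib u) ≤ ∫ u in (1:ℝ)..(y+1), Pib 1 :=
        intervalIntegral.integral_mono_on (by linarith)
          (hPibInt 1 (y+1) one_pos (by linarith)) intervalIntegrable_const
          (fun u hu => hanti 1 u one_pos hu.1)
      have : (∫ u in (1:ℝ)..(y+1), (Pib 1 : ℝ)) = y * Pib 1 := by
        rw [intervalIntegral.integral_const, smul_eq_mul]; ring
      rw [this] at hc; linarith
    have hgnn : 0 ≤ ∫ u in (1:ℝ)..x, (Pib u - Pib (y + u)) :=
      intervalIntegral.integral_nonneg hx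
        (fun u hu => sub_nonneg.2 (hanti u (y + u)
          (lt_of_lt_of_le one_pos hu.1) (by linarith)))
    have hAx : (∫ u in (1:ℝ)..x, Pib u) ≤ A x := by
      have e3 : (∫ u in (0:ℝ)..1, Pib u) + (∫ u in (1:ℝ)..x, Pib u)
          = ∫ u in (0:ℝ)..x, Pib u :=
        intervalIntegral.integral_add_adjacent_intervals (hint 1 one_pos) i1
      have h01 : 0 ≤ ∫ u in (0:ℝ)..1, Pib u := by
        apply intervalIntegral.integral_nonneg_of_ae_restrict zero_le_one
        have hne : ∀ᵐ u ∂(volume.restrict (Icc (0:ℝ) 1)), u ≠ 0 := by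
          apply ae_restrict_of_ae
          have : (volume : Measure ℝ) {(0:ℝ)} = 0 := Real.volume_singleton
          filter_upwards [measure_eq_zero_iff_ae_notMem.mp this] with u hu
          simpa using hu
        filter_upwards [hne, ae_restrict_mem measurableSet_Icc] with u hu hmem
        exact hnonneg u (lt_of_le_of_ne hmem.1 (Ne.symm hu))
      rw [hA]; linarith
    refine ⟨hgnn, ?_, ?_⟩
    · linarith
    · linarith
  -- the main limit argument
  rw [NormedAddCommGroup.tendsto_nhds_zero]
  intro ε hε
  obtain ⟨K, hKtail, hK1⟩ :=
    ((htail.eventually (gt_mem_nhds (half_pos hε))).and (eventually_ge_atTop (1:ℝ))).exists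
  have hK : (0:ℝ) < K := lt_of_lt_of_le one_pos hK1
  set M : ℝ := ∫ y in Set.Ioc (0:ℝ) K, y ∂PiH with hM
  have hM0 : 0 ≤ M := setIntegral_nonneg measurableSet_Ioc (fun y hy => hy.1.le)
  set C : ℝ := Pib 1 * M with hC
  have hC0 : 0 ≤ C := mul_nonneg hPib1 hM0
  set T : ℝ := (PiH (Set.Ioi K)).toReal with hT
  have hT0 : 0 ≤ T := ENNReal.toReal_nonneg
  filter_upwards [hAinf.eventually_ge_atTop (2*C/ε + 1), eventually_ge_atTop (1:ℝ)]
    with x hAx hx1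
  have hdiv0 : 0 ≤ 2*C/ε := div_nonneg (by linarith) hε.le
  have hApos : (0:ℝ) < A x := by linarith
  -- restriction identities
  have hrr1 : (PiH.restrict (Set.Ioi (0:ℝ))).restrict (Set.Ioc 0 K) = PiH.restrict (Set.Ioc 0 K) := by
    rw [Measure.restrict_restrict measurableSet_Ioc,
      Set.inter_eq_left.2 Set.Ioc_subset_Ioi_self]
  have hrr2 : (PiH.restrict (Set.Ioi (0:ℝ))).restrict (Set.Ioi K) = PiH.restrict (Set.Ioi K) := by
    rw [Measure.restrict_restrict measurableSet_Ioi,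
      Set.inter_eq_left.2 (Set.Ioi_subset_Ioi hK.le)]
  -- dominating function
  set h : ℝ → ℝ := fun y => (Set.Ioc (0:ℝ) K).indicator (fun y => Pib 1 * y) y
      + (Set.Ioi K).indicator (fun _ => A x) y with hh
  have hint1 : Integrable ((Set.Ioc (0:ℝ) K).indicator (fun y => Pib 1 * y))
      (PiH.restrict (Set.Ioi (0:ℝ))) := by
    rw [integrable_indicator_iff measurableSet_Ioc]
    unfold IntegrableOn
    rw [hrr1]
    exact (hmom K hK).const_mul (Pib 1)
  have hint2 : Integrable ((Set.Ioi K).indicator (fun _ : ℝ => A x))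
      (PiH.restrict (Set.Ioi (0:ℝ))) := by
    rw [integrable_indicator_iff measurableSet_Ioi]
    unfold IntegrableOn
    rw [hrr2]
    exact integrableOn_const (htailfin K hK).ne
  have hhint : Integrable h (PiH.restrict (Set.Ioi (0:ℝ))) := hint1.add hint2
  -- I x ≤ ∫ h
  have hIle : I x ≤ C + T * A x := by
    have hle : I x ≤ ∫ y in Set.Ioi (0:ℝ), h y ∂PiH := by
      rw [hI]
      apply integral_mono_of_nonneg ?_ hhint ?_
      · filter_upwards [ae_restrict_mem measurableSet_Ioi] with y hy
        exact (hgkey y x hy hx1).1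
      · filter_upwards [ae_restrict_mem measurableSet_Ioi] with y hy
        obtain ⟨hg0, hgb1, hgb2⟩ := hgkey y x hy hx1
        by_cases hyK : y ≤ K
        · have : h y = Pib 1 * y := by
            rw [hh]; simp only
            rw [Set.indicator_of_mem (Set.mem_Ioc.mpr ⟨hy, hyK⟩), Set.indicator_of_notMem (by simpa using hyK)]
            ring
          rw [this]; exact hgb1
        · have : h y = A x := by
            rw [hh]; simp only
            rw [Set.indicator_of_notMem (fun hc => hyK hc.2),
              Set.indicator_of_mem (by simpa using lt_of_not_ge hyK)]
            ring
          rw [this]; exact hgb2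
    have e1 : (∫ y in Set.Ioi (0:ℝ),
        (Set.Ioc (0:ℝ) K).indicator (fun y => Pib 1 * y) y ∂PiH) = Pib 1 * M := by
      rw [integral_indicator measurableSet_Ioc, hrr1, integral_const_mul]
    have e2 : (∫ y in Set.Ioi (0:ℝ),
        (Set.Ioi K).indicator (fun _ : ℝ => A x) y ∂PiH) = T * A x := by
      rw [integral_indicator measurableSet_Ioi, hrr2, setIntegral_const, smul_eq_mul]
      rfl
    have hcomp : (∫ y in Set.Ioi (0:ℝ), h y ∂PiH) = C + T * A x := by
      have hadd : (∫ y in Set.Ioi (0:ℝ), h y ∂PiH)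
          = (∫ y in Set.Ioi (0:ℝ),
              (Set.Ioc (0:ℝ) K).indicator (fun y => Pib 1 * y) y ∂PiH)
            + ∫ y in Set.Ioi (0:ℝ), (Set.Ioi K).indicator (fun _ : ℝ => A x) y ∂PiH :=
        integral_add hint1 hint2
      rw [hadd, e1, e2, hC]
    linarith [hcomp ▸ hle]
  -- nonnegativity of I x
  have hI0 : 0 ≤ I x := by
    rw [hI]
    exact setIntegral_nonneg measurableSet_Ioi (fun y hy => (hgkey y x hy hx1).1)
  -- conclude
  rw [Real.norm_eq_abs, abs_of_nonneg (div_nonneg hI0 hApos.le), div_lt_iff₀ hApos]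
  have h2C : 2*C ≤ (A x - 1) * ε := (div_le_iff₀ hε).1 (by linarith)
  have hTA : T * A x < ε/2 * A x := mul_lt_mul_of_pos_right hKtail hApos
  nlinarith
end

section
/- For two Lévy tails Π̄₁, Π̄₂ : (0,∞) → (0,∞), nonincreasing, suppose Π̄₁ ∈ 𝓛 (long-tailed: Π̄₁(u+x)/Π̄₁(u) → 1 for each fixed x) and G : [0,∞) → [0,∞) is a nondecreasing unbounded function (a renewal measure) with Π̄₂(u) = ∫_{(0,∞)} Π̄₁(y+u) G(dy). Then Π̄₂(u)/Π̄₁(u) → ∞ as u → ∞. -/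
open Filter MeasureTheory Set

/-- if Π̄₁ ∈ 𝓛 and G is an infinite renewal measure, then
Π̄₂(u) = ∫ Π̄₁(y+u) G(dy) satisfies Π̄₂(u)/Π̄₁(u) → ∞. -/
theorem stmt_15 (Pi1 : ℝ → ℝ) (G : Measure ℝ)
    (hpos : ∀ u > 0, 0 < Pi1 u)
    (hanti : ∀ u v : ℝ, 0 < u → u ≤ v → Pi1 v ≤ Pi1 u)
    (hL : ∀ x : ℝ, Tendsto (fun u => Pi1 (u + x) / Pi1 u) atTop (nhds 1))
    (hG : G (Set.Ioi (0:ℝ)) = ⊤)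
    (hint : ∀ u > 0, IntegrableOn (fun y => Pi1 (y + u)) (Set.Ioi (0:ℝ)) G) :
    Tendsto (fun u => (∫ y in Set.Ioi (0:ℝ), Pi1 (y + u) ∂G) / Pi1 u) atTop atTop := by
  rw [tendsto_atTop]
  intro M
  set K : ℝ := 2 * |M| + 2 with hK
  have hKpos : 0 < K := by positivity
  -- choose n with G (Ioc 0 n) > K
  have hmono : Monotone (fun k : ℕ => Set.Ioc (0:ℝ) k) := by
    intro a b hab
    exact Set.Ioc_subset_Ioc le_rfl (by exact_mod_cast hab)
  have hunion : (⋃ k : ℕ, Set.Ioc (0:ℝ) k) = Set.Ioi (0:ℝ) := by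
    ext y
    simp only [Set.mem_iUnion, Set.mem_Ioc, Set.mem_Ioi]
    constructor
    · rintro ⟨k, hy, _⟩; exact hy
    · intro hy
      obtain ⟨k, hk⟩ := exists_nat_ge y
      exact ⟨k, hy, hk⟩
  have hten : Tendsto (fun k : ℕ => G (Set.Ioc (0:ℝ) k)) atTop (nhds (G (Set.Ioi (0:ℝ)))) := by
    rw [← hunion]
    exact tendsto_measure_iUnion_atTop hmono
  rw [hG] at hten
  have hev : ∀ᶠ k : ℕ in atTop, ENNReal.ofReal K < G (Set.Ioc (0:ℝ) k) :=
    hten.eventually (eventually_gt_nhds (by simp : ENNReal.ofReal K < ⊤))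
  obtain ⟨n, hn⟩ : ∃ n : ℕ, ENNReal.ofReal K < G (Set.Ioc (0:ℝ) n) := hev.exists
  -- finiteness of G (Ioc 0 n)
  have hsub : Set.Ioc (0:ℝ) n ⊆ Set.Ioi (0:ℝ) := fun y hy => hy.1
  have hfin : G (Set.Ioc (0:ℝ) n) < ⊤ := by
    by_contra htop
    push_neg at htop
    have htop' : G (Set.Ioc (0:ℝ) n) = ⊤ := top_le_iff.mp htop
    have hε : (0:ℝ) < Pi1 ((n:ℝ) + 1) := hpos _ (by positivity)
    have hfi := (hint 1 one_pos).2
    rw [hasFiniteIntegral_def] at hfi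
    have hle : ∫⁻ y in Set.Ioc (0:ℝ) n, ENNReal.ofReal (Pi1 ((n:ℝ) + 1)) ∂G
        ≤ ∫⁻ y in Set.Ioi (0:ℝ), ‖Pi1 (y + 1)‖₊ ∂G := by
      refine le_trans ?_ (lintegral_mono_set hsub)
      refine setLIntegral_mono' measurableSet_Ioc ?_
      intro y hy
      have h1 : Pi1 ((n:ℝ) + 1) ≤ Pi1 (y + 1) :=
        hanti _ _ (by linarith [hy.1]) (by linarith [hy.2])
      have h2 : (0:ℝ) ≤ Pi1 (y + 1) := le_trans hε.le h1
      calc ENNReal.ofReal (Pi1 ((n:ℝ) + 1)) ≤ ENNReal.ofReal (Pi1 (y + 1)) :=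
            ENNReal.ofReal_le_ofReal h1
        _ = ‖Pi1 (y + 1)‖₊ := (Real.enorm_eq_ofReal h2).symm
    rw [setLIntegral_const, htop',
      ENNReal.mul_top (ENNReal.ofReal_pos.mpr hε).ne'] at hle
    exact hfi.not_ge hle
  set c : ℝ := (G (Set.Ioc (0:ℝ) n)).toReal with hc
  have hcK : K < c :=
    (ENNReal.ofReal_lt_iff_lt_toReal hKpos.le hfin.ne).mp hn
  have hcpos : 0 < c := lt_trans hKpos hcK
  -- eventual ratio bound
  have hr : ∀ᶠ u in atTop, (1/2 : ℝ) ≤ Pi1 (u + n) / Pi1 u :=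
    (hL n).eventually (eventually_ge_nhds (by norm_num))
  filter_upwards [hr, eventually_gt_atTop (0:ℝ)] with u hru hu
  have pu : 0 < Pi1 u := hpos u hu
  -- lower bound the integral
  have hnonneg : 0 ≤ᵐ[G.restrict (Set.Ioi (0:ℝ))] fun y => Pi1 (y + u) := by
    filter_upwards [ae_restrict_mem measurableSet_Ioi] with y hy
    exact (hpos _ (by simp at hy; linarith)).le
  have step1 : ∫ y in Set.Ioc (0:ℝ) n, Pi1 (y + u) ∂G
      ≤ ∫ y in Set.Ioi (0:ℝ), Pi1 (y + u) ∂G :=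
    setIntegral_mono_set (hint u hu) hnonneg (HasSubset.Subset.eventuallyLE hsub)
  have step2 : c * Pi1 ((n:ℝ) + u) ≤ ∫ y in Set.Ioc (0:ℝ) n, Pi1 (y + u) ∂G := by
    have hconst : ∫ y in Set.Ioc (0:ℝ) n, Pi1 ((n:ℝ) + u) ∂G = c * Pi1 ((n:ℝ) + u) := by
      rw [setIntegral_const, smul_eq_mul]; rfl
    rw [← hconst]
    refine setIntegral_mono_on (integrableOn_const hfin.ne)
      ((hint u hu).mono_set hsub) measurableSet_Ioc ?_
    intro y hy
    exact hanti _ _ (by linarith [hy.1]) (by linarith [hy.2])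
  have key : c * Pi1 ((n:ℝ) + u) ≤ ∫ y in Set.Ioi (0:ℝ), Pi1 (y + u) ∂G :=
    le_trans step2 step1
  have hdiv : c * Pi1 ((n:ℝ) + u) / Pi1 u
      ≤ (∫ y in Set.Ioi (0:ℝ), Pi1 (y + u) ∂G) / Pi1 u :=
    div_le_div_of_nonneg_right key pu.le
  calc M ≤ |M| + 1 := by cases abs_cases M <;> linarith
    _ ≤ c * (1/2) := by rw [hK] at hcK; linarith
    _ ≤ c * (Pi1 (u + n) / Pi1 u) := by
        exact mul_le_mul_of_nonneg_left hru hcpos.le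
    _ = c * Pi1 ((n:ℝ) + u) / Pi1 u := by rw [mul_div_assoc, add_comm u (n:ℝ)]
    _ ≤ _ := hdiv
end
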